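/- With γ_n = nπ/l, b_n = γ_n² + λ²/4, g_n = (α + ε b_n)/2, a_λ = α + ελ²/4, and p_λ = π²/(επ² + a_λ l²), for every n ≥ 1 with b_n < g_n² one has g_n - √(g_n² - b_n) ≥ p_λ; consequently for all t ≥ 0, exp(-t(g_n - ω_n)) ≤ exp(-p_λ t), where ω_n = √(g_n² - b_n). -/

import Mathlib

open Real

set_option maxHeartbeats 800000

theorem g_sub_omega_ge_p (l lam alpha eps : ℝ) (hl : 0 < l) (hlam : 0 < lam)
    (halpha : 0 < alpha) (heps : 0 < eps) (n : ℕ) (hn : 1 ≤ n)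
    (γ b g ω a p : ℝ)
    (hγ : γ = n * π / l) (hb : b = γ ^ 2 + lam ^ 2 / 4)
    (hg : g = (alpha + eps * b) / 2) (hlt : b < g ^ 2)
    (hω : ω = Real.sqrt (g ^ 2 - b))
    (ha : a = alpha + eps * lam ^ 2 / 4)
    (hp : p = π ^ 2 / (eps * π ^ 2 + a * l ^ 2)) :
    p ≤ g - ω ∧ ∀ t : ℝ, 0 ≤ t →
      Real.exp (-t * (g - ω)) ≤ Real.exp (-p * t) := by
  have hπ : 0 < π := Real.pi_pos
  have hn1 : (1 : ℝ) ≤ (n : ℝ) := by exact_mod_cast hn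
  have hγ2 : γ ^ 2 * l ^ 2 = (n : ℝ) ^ 2 * π ^ 2 := by
    rw [hγ]; field_simp
  have hbl2 : π ^ 2 ≤ b * l ^ 2 := by
    have hn2 : (1 : ℝ) ≤ (n : ℝ) ^ 2 := by nlinarith
    nlinarith [sq_nonneg lam, sq_nonneg l, hb]
  have hbpos : 0 < b := by nlinarith [sq_nonneg l]
  have hgpos : 0 < g := by rw [hg]; nlinarith
  have hωnn : 0 ≤ ω := hω ▸ Real.sqrt_nonneg _
  have hω2 : ω ^ 2 = g ^ 2 - b := by
    rw [hω, sq, Real.mul_self_sqrt (by linarith)]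
  have hω2lt : ω ^ 2 < g ^ 2 := by linarith
  have hωlt : ω < g := lt_of_pow_lt_pow_left₀ 2 hgpos.le hω2lt
  have hapos : 0 < a := by rw [ha]; positivity
  have hdpos : 0 < eps * π ^ 2 + a * l ^ 2 := by positivity
  have h2g : 0 < alpha + eps * b := by nlinarith
  have h1 : p ≤ b / (alpha + eps * b) := by
    rw [hp, div_le_div_iff₀ hdpos h2g]
    have haα : alpha ≤ a := by rw [ha]; nlinarith [mul_nonneg heps.le (sq_nonneg lam)]
    have key : alpha * π ^ 2 ≤ b * (a * l ^ 2) := by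
      calc alpha * π ^ 2 ≤ a * (b * l ^ 2) :=
            mul_le_mul haα hbl2 (by positivity) hapos.le
        _ = b * (a * l ^ 2) := by ring
    nlinarith [key]
  have h2 : b / (alpha + eps * b) ≤ g - ω := by
    rw [div_le_iff₀ h2g]
    have h2g' : alpha + eps * b = 2 * g := by rw [hg]; ring
    rw [h2g']
    nlinarith [sq_nonneg (g - ω), hω2]
  have hmain : p ≤ g - ω := le_trans h1 h2
  refine ⟨hmain, fun t ht => ?_⟩
  apply Real.exp_le_exp.mpr
  nlinarith [mul_le_mul_of_nonneg_left hmain ht]
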